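/- Consider N robots at fixed positions and N goals in a metric space. If the swap rule (swap the goals of i and j whenever dist(q_i, g(j)) < dist(q_i, g(i)) and the swap does not increase the total cost) is applied, and ties in total cost are only allowed finitely often from any assignment, then the process converges to an assignment g* in which for every pair (i, j) either dist(q_i, g*(j)) ≥ dist(q_i, g*(i)) or the swap would strictly increase total cost. -/
import Mathlib


/-- The GSPI swap condition for robots `i`, `j` under assignment `g`:
robot `i` is strictly closer to `j`'s goal than to its own, and the swap does
not increase total cost. -/
def SwapCond {X : Type*} [MetricSpace X] {N : ℕ}
    (q G : Fin N → X) (g : Equiv.Perm (Fin N)) (i j : Fin N) : Prop :=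
  dist (q i) (G (g j)) < dist (q i) (G (g i)) ∧
  ∑ k, dist (q k) (G (g (Equiv.swap i j k))) ≤ ∑ k, dist (q k) (G (g k))

/-- If the swap rule is applied whenever possible and ties in total
cost occur only finitely often, the process converges to an assignment `g*` at
which no pair satisfies the swap condition. -/
theorem swap_dynamics_converges_to_fixed_point
    {X : Type*} [MetricSpace X] {N : ℕ}
    (q G : Fin N → X) (f : ℕ → Equiv.Perm (Fin N))
    -- each step: either no pair satisfies the swap rule and the assignment is
    -- kept, or some pair satisfying the swap rule is swapped
    (hstep : ∀ n,
      (f (n + 1) = f n ∧ ∀ i j, i ≠ j → ¬ SwapCond q G (f n) i j) ∨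
      (∃ i j, i ≠ j ∧ SwapCond q G (f n) i j ∧
        f (n + 1) = (Equiv.swap i j).trans (f n)))
    -- ties in total cost are only allowed finitely often
    (hties : {n | f (n + 1) ≠ f n ∧
        ∑ k, dist (q k) (G (f (n + 1) k)) = ∑ k, dist (q k) (G (f n k))}.Finite) :
    ∃ n₀, (∀ n, n₀ ≤ n → f n = f n₀) ∧
      ∀ i j, i ≠ j → ¬ SwapCond q G (f n₀) i j := by
  set c : Equiv.Perm (Fin N) → ℝ := fun g => ∑ k, dist (q k) (G (g k)) with hc
  -- cost is nonincreasing
  have hmono : ∀ n, c (f (n + 1)) ≤ c (f n) := by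
    intro n
    rcases hstep n with ⟨h1, _⟩ | ⟨i, j, hij, hsw, heq⟩
    · rw [h1]
    · have : c (f (n + 1)) = ∑ k, dist (q k) (G (f n (Equiv.swap i j k))) := by
        simp [hc, heq, Equiv.trans_apply]
      rw [this]; exact hsw.2
  have hchain : ∀ m n, m ≤ n → c (f n) ≤ c (f m) := by
    intro m n h
    induction n with
    | zero => simp_all
    | succ n ih =>
      rcases Nat.lt_or_ge m (n + 1) with h' | h'
      · exact (hmono n).trans (ih (Nat.lt_succ_iff.mp h'))
      · have : m = n + 1 := le_antisymm h h'
        rw [this]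
  -- strict decreases are finite
  have hD : {n | c (f (n + 1)) < c (f n)}.Finite := by
    apply Set.Finite.of_finite_image (f := fun n => c (f n))
    · exact (Set.finite_range c).subset (by rintro _ ⟨n, _, rfl⟩; exact ⟨f n, rfl⟩)
    · intro m hm n hn hmn
      simp only at hmn
      by_contra hne
      rcases Nat.lt_or_ge m n with h | h
      · have h1 : c (f n) ≤ c (f (m + 1)) := hchain _ _ h
        have h2 : c (f (m + 1)) < c (f m) := hm
        linarith
      · have h : n < m := lt_of_le_of_ne h (Ne.symm hne)
        have h1 : c (f m) ≤ c (f (n + 1)) := hchain _ _ h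
        have h2 : c (f (n + 1)) < c (f n) := hn
        linarith
  have hS : {n | f (n + 1) ≠ f n}.Finite := by
    apply (hD.union hties).subset
    intro n hn
    rcases lt_or_eq_of_le (hmono n) with h | h
    · exact Or.inl h
    · exact Or.inr ⟨hn, h⟩
  obtain ⟨m, hm⟩ := hS.bddAbove
  refine ⟨m + 1, ?_, ?_⟩
  · have hconst : ∀ n, m + 1 ≤ n → f n = f (m + 1) := by
      intro n hn
      induction n with
      | zero => omega
      | succ n ih =>
        rcases Nat.lt_or_ge (m + 1) (n + 1) with h | h
        · have hn' : m + 1 ≤ n := Nat.lt_succ_iff.mp h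
          have : f (n + 1) = f n := by
            by_contra hne
            exact absurd (hm hne) (by omega)
          rw [this, ih hn']
        · have : n + 1 = m + 1 := le_antisymm h hn
          rw [this]
    exact hconst
  · have hfix : f (m + 1 + 1) = f (m + 1) := by
      by_contra hne
      exact absurd (hm hne) (by omega)
    rcases hstep (m + 1) with ⟨_, h2⟩ | ⟨i, j, hij, _, heq⟩
    · exact h2
    · exfalso
      apply hij
      have := congrArg (fun g => g i) (hfix ▸ heq)
      simp [Equiv.trans_apply, Equiv.swap_apply_left] at this
      exact this
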